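/- Let G be a group of collineations of PG(k−1,q). Then the number of orbits of G on points equals the number of orbits of G on hyperplanes. -/

import Mathlib

open Module Submodule MulAction Matrix Finset

section BlockAuxSection1


variable {F : Type} [Field F] [Fintype F]

lemma BlockAux.count_lines {M : Type} [AddCommGroup M] [Module F M] [Finite M]
    (U : Submodule F M) :
    Nat.card {L : Submodule F M // finrank F L = 1 ∧ L ≤ U} * (Fintype.card F - 1)
      = Fintype.card F ^ finrank F U - 1 := by
  classical
  have : Fintype M := Fintype.ofFinite M
  -- the map sending a nonzero vector of U to its span
  set T := {L : Submodule F M // finrank F L = 1 ∧ L ≤ U}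
  have : Finite (Submodule F M) :=
    Finite.of_injective (fun W => (W : Set M)) SetLike.coe_injective
  have : Fintype T := Fintype.ofFinite T
  have hθmem : ∀ v : {v : U // v ≠ 0}, finrank F (span F {(v.1 : M)}) = 1 ∧
      span F {(v.1 : M)} ≤ U := by
    intro v
    have hv : (v.1 : M) ≠ 0 := by
      simpa [Submodule.coe_eq_zero] using v.2
    exact ⟨finrank_span_singleton hv, (span_singleton_le_iff_mem _ _).2 v.1.2⟩
  set θ : {v : U // v ≠ 0} → T := fun v => ⟨span F {(v.1 : M)}, hθmem v⟩ with hθ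
  -- fibers
  have fibEquiv : ∀ L : T, {v : {v : U // v ≠ 0} // θ v = L} ≃ {w : L.1 // w ≠ 0} := by
    intro L
    refine ⟨fun v => ⟨⟨v.1.1.1, ?_⟩, ?_⟩, fun w => ⟨⟨⟨w.1.1, L.2.2 w.1.2⟩, ?_⟩, ?_⟩, ?_, ?_⟩
    · have h : span F {(v.1.1.1 : M)} = L.1 := congrArg Subtype.val v.2
      exact h ▸ mem_span_singleton_self _
    · have hv : (v.1.1 : M) ≠ 0 := by simpa [Submodule.coe_eq_zero] using v.1.2
      simpa [Submodule.coe_eq_zero] using hv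
    · have hw : (w.1 : M) ≠ 0 := by simpa [Submodule.coe_eq_zero] using w.2
      simpa [Submodule.coe_eq_zero] using hw
    · apply Subtype.ext
      show span F {(w.1 : M)} = L.1
      have hw : (w.1 : M) ≠ 0 := by simpa [Submodule.coe_eq_zero] using w.2
      refine Submodule.eq_of_le_of_finrank_le
        ((span_singleton_le_iff_mem _ _).2 w.1.2) ?_
      rw [L.2.1, finrank_span_singleton hw]
    · intro v; apply Subtype.ext; apply Subtype.ext; rfl
    · intro w; apply Subtype.ext; rfl
  have hcards : Fintype.card {v : U // v ≠ 0} = Fintype.card T * (Fintype.card F - 1) := by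
    rw [Fintype.card_congr (Equiv.sigmaFiberEquiv θ).symm, Fintype.card_sigma]
    have : ∀ L : T, Fintype.card {v : {v : U // v ≠ 0} // θ v = L}
        = Fintype.card F - 1 := by
      intro L
      rw [Fintype.card_congr (fibEquiv L)]
      have h1 : Fintype.card L.1 = Fintype.card F := by
        rw [card_eq_pow_finrank (K := F) (V := L.1), L.2.1, pow_one]
      rw [Fintype.card_subtype_compl, Fintype.card_subtype_eq, h1]
    simp [this, Finset.sum_const, mul_comm]
  have hU : Fintype.card {v : U // v ≠ 0} = Fintype.card F ^ finrank F U - 1 := by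
    rw [Fintype.card_subtype_compl, Fintype.card_subtype_eq,
      card_eq_pow_finrank (K := F) (V := U)]
  rw [Nat.card_eq_fintype_card, ← hcards, hU]

end BlockAuxSection1

section BlockAuxSection2


variable {F : Type} [Field F] [Fintype F] {V : Type} [AddCommGroup V] [Module F V]

lemma BlockAux.finrank_ann [FiniteDimensional F V] (U : Submodule F V) :
    finrank F U.dualAnnihilator = finrank F V - finrank F U := by
  have h := Subspace.finrank_add_finrank_dualCoannihilator_eq (W := U.dualAnnihilator)
  rw [Subspace.dualAnnihilator_dualCoannihilator_eq] at h
  have h2 : finrank F U ≤ finrank F V := Submodule.finrank_le U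
  omega


lemma BlockAux.count_hyperplanes [Finite V] (hV : 1 ≤ finrank F V) (U : Submodule F V) :
    Nat.card {W : Submodule F V // finrank F W = finrank F V - 1 ∧ U ≤ W}
        * (Fintype.card F - 1)
      = Fintype.card F ^ (finrank F V - finrank F U) - 1 := by
  have hfin : Finite (Dual F V) := Module.finite_of_finite F
  have E : {W : Submodule F V // finrank F W = finrank F V - 1 ∧ U ≤ W} ≃
      {L : Submodule F (Dual F V) // finrank F L = 1 ∧ L ≤ U.dualAnnihilator} := by
    refine ⟨fun W => ⟨W.1.dualAnnihilator, ?_, Submodule.dualAnnihilator_anti W.2.2⟩,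
      fun L => ⟨L.1.dualCoannihilator, ?_, ?_⟩, ?_, ?_⟩
    · rw [BlockAux.finrank_ann, W.2.1]; omega
    · have h := Subspace.finrank_add_finrank_dualCoannihilator_eq (W := L.1)
      rw [L.2.1] at h; omega
    · intro x hx
      rw [Submodule.mem_dualCoannihilator]
      intro φ hφ
      exact Submodule.mem_dualAnnihilator φ |>.1 (L.2.2 hφ) x hx
    · intro W
      exact Subtype.ext Subspace.dualAnnihilator_dualCoannihilator_eq
    · intro L
      exact Subtype.ext Subspace.dualCoannihilator_dualAnnihilator_eq
  rw [Nat.card_congr E, BlockAux.count_lines, BlockAux.finrank_ann]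

end BlockAuxSection2



noncomputable def BlockAux.dualityEquiv (F : Type) [Field F] [Fintype F] (k : ℕ) (hk : 1 ≤ k) :
    {W : Submodule F (Fin k → F) // finrank F W = k - 1} ≃
      {W : Submodule F (Fin k → F) // finrank F W = 1} := by
  have hV : finrank F (Fin k → F) = k := Module.finrank_fin_fun F
  let ε : Dual F (Fin k → F) ≃ₗ[F] (Fin k → F) := (Pi.basisFun F (Fin k)).toDualEquiv.symm
  refine ⟨fun W => ⟨Submodule.map ε.toLinearMap W.1.dualAnnihilator, ?_⟩,
    fun p => ⟨(Submodule.map ε.symm.toLinearMap p.1).dualCoannihilator, ?_⟩, ?_, ?_⟩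
  · rw [LinearEquiv.finrank_map_eq, BlockAux.finrank_ann, hV, W.2]
    omega
  · have h := Subspace.finrank_add_finrank_dualCoannihilator_eq
      (W := Submodule.map ε.symm.toLinearMap p.1)
    rw [LinearEquiv.finrank_map_eq, p.2, hV] at h
    omega
  · intro W
    apply Subtype.ext
    show (Submodule.map ε.symm.toLinearMap
      (Submodule.map ε.toLinearMap W.1.dualAnnihilator)).dualCoannihilator = W.1
    have hc : (ε.symm.toLinearMap ∘ₗ ε.toLinearMap) = LinearMap.id := by ext x; simp
    rw [← Submodule.map_comp, hc, Submodule.map_id]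
    exact Subspace.dualAnnihilator_dualCoannihilator_eq
  · intro p
    apply Subtype.ext
    show Submodule.map ε.toLinearMap
      ((Submodule.map ε.symm.toLinearMap p.1).dualCoannihilator.dualAnnihilator) = p.1
    have hc : (ε.toLinearMap ∘ₗ ε.symm.toLinearMap) = LinearMap.id := by ext x; simp
    rw [Subspace.dualCoannihilator_dualAnnihilator_eq, ← Submodule.map_comp, hc,
      Submodule.map_id]



section
variable (F : Type) [Field F] [Fintype F] (k : ℕ)

local notation "Pt" => {W : Submodule F (Fin k → F) // finrank F W = 1}
local notation "Hy" => {W : Submodule F (Fin k → F) // finrank F W = k - 1}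

set_option maxHeartbeats 1000000 in
lemma BlockAux.fixed_card_eq (hk : 2 ≤ k) (π : Equiv.Perm Pt) (ρ : Equiv.Perm Hy)
    (hcompat : ∀ (p : Pt) (W : Hy), p.1 ≤ W.1 ↔ (π p).1 ≤ (ρ W).1) :
    Nat.card {p : Pt // π p = p} = Nat.card {W : Hy // ρ W = W} := by
  classical
  have hV : finrank F (Fin k → F) = k := Module.finrank_fin_fun F
  have hfinsub : Finite (Submodule F (Fin k → F)) :=
    Finite.of_injective (fun W => (W : Set (Fin k → F))) SetLike.coe_injective
  have : Fintype Pt := Fintype.ofFinite _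
  have : Fintype Hy := Fintype.ofFinite _
  set q := Fintype.card F with hqdef
  have hq : 2 ≤ q := Fintype.one_lt_card
  set e : Hy ≃ Pt := BlockAux.dualityEquiv F k (by omega) with he
  -- the three matrices
  set N : Matrix Pt Pt ℚ := fun p y => if p.1 ≤ (e.symm y).1 then 1 else 0 with hN
  set A : Matrix Pt Pt ℚ := fun p p' => if p' = π.symm p then 1 else 0 with hA
  set B : Matrix Pt Pt ℚ := fun y' y => if y' = e (ρ (e.symm y)) then 1 else 0 with hB
  -- intertwining
  have hAN : A * N = N * B := by
    ext p y
    rw [Matrix.mul_apply, Matrix.mul_apply]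
    have h1 : (∑ p', A p p' * N p' y) = N (π.symm p) y := by
      rw [Finset.sum_eq_single (π.symm p)]
      · simp [hA]
      · intro b _ hb; simp [hA, hb]
      · intro h; exact absurd (Finset.mem_univ _) h
    have h2 : (∑ y', N p y' * B y' y) = N p (e (ρ (e.symm y))) := by
      rw [Finset.sum_eq_single (e (ρ (e.symm y)))]
      · simp [hB]
      · intro b _ hb; simp [hB, hb]
      · intro h; exact absurd (Finset.mem_univ _) h
    rw [h1, h2]
    have : (π.symm p).1 ≤ (e.symm y).1 ↔ p.1 ≤ (ρ (e.symm y)).1 := by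
      rw [hcompat (π.symm p) (e.symm y), Equiv.apply_symm_apply]
    simp only [hN, Equiv.symm_apply_apply]
    rw [if_congr this rfl rfl]
  -- traces count fixed elements
  have htrA : trace A = (Nat.card {p : Pt // π p = p} : ℚ) := by
    simp only [Matrix.trace, Matrix.diag, hA]
    rw [Finset.sum_boole, ← Fintype.card_subtype, Nat.card_eq_fintype_card]
    norm_cast
    exact Fintype.card_congr (Equiv.subtypeEquivRight (fun p => Equiv.eq_symm_apply π))
  have htrB : trace B = (Nat.card {W : Hy // ρ W = W} : ℚ) := by
    simp only [Matrix.trace, Matrix.diag, hB]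
    rw [Finset.sum_boole, ← Fintype.card_subtype, Nat.card_eq_fintype_card]
    norm_cast
    refine Fintype.card_congr (Equiv.subtypeEquiv e.symm (fun x => ?_))
    rw [← Equiv.symm_apply_eq e, eq_comm]
  -- counting constants
  have hq1 : 0 < q - 1 := by omega
  set a : ℕ := (q ^ (k-1) - 1) / (q - 1) with ha
  set b : ℕ := (q ^ (k-2) - 1) / (q - 1) with hb
  have hdvd : ∀ n : ℕ, (q - 1) ∣ q ^ n - 1 := fun n => by
    simpa using Nat.sub_dvd_pow_sub_pow q 1 n
  have haq : a * (q - 1) = q ^ (k-1) - 1 := Nat.div_mul_cancel (hdvd _)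
  have hbq : b * (q - 1) = q ^ (k-2) - 1 := Nat.div_mul_cancel (hdvd _)
  have hab : b < a := by
    have h2 : q ^ (k-2) < q ^ (k-1) := Nat.pow_lt_pow_right (by omega) (by omega)
    have h3 : 1 ≤ q ^ (k-2) := Nat.one_le_pow _ _ (by omega)
    by_contra h
    have h4 : q ^ (k-1) - 1 ≤ q ^ (k-2) - 1 := by
      rw [← haq, ← hbq]; exact Nat.mul_le_mul_right _ (by omega)
    omega
  -- the incidence counts
  have hcount : ∀ p p' : Pt, Nat.card {W : Hy // p.1 ⊔ p'.1 ≤ W.1}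
      = if p = p' then a else b := by
    intro p p'
    have hE : {W : Hy // p.1 ⊔ p'.1 ≤ W.1} ≃
        {W : Submodule F (Fin k → F) //
          finrank F W = finrank F (Fin k → F) - 1 ∧ p.1 ⊔ p'.1 ≤ W} :=
      ⟨fun W => ⟨W.1.1, W.1.2.trans (congrArg (· - 1) hV).symm, W.2⟩,
       fun Y => ⟨⟨Y.1, Y.2.1.trans (congrArg (· - 1) hV)⟩, Y.2.2⟩,
       fun _ => rfl, fun _ => by apply Subtype.ext; rfl⟩
    have hc := BlockAux.count_hyperplanes (F := F) (V := Fin k → F) (by rw [hV]; omega)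
      (p.1 ⊔ p'.1)
    rw [← Nat.card_congr hE] at hc
    by_cases hpp : p = p'
    · subst hpp
      have hU : finrank F (p.1 ⊔ p.1 : Submodule F (Fin k → F)) = 1 := by
        rw [sup_idem]; exact p.2
      rw [hU, hV] at hc
      rw [if_pos rfl]
      exact Nat.eq_of_mul_eq_mul_right hq1 (by rw [haq]; exact hc)
    · have hne : p.1 ≠ p'.1 := fun h => hpp (Subtype.ext h)
      have hinf : p.1 ⊓ p'.1 = ⊥ := by
        by_contra hbot
        have hle : p.1 ⊓ p'.1 ≤ p.1 := inf_le_left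
        have hfr : finrank F (p.1 ⊓ p'.1 : Submodule F (Fin k → F)) ≤ 1 := by
          exact le_of_le_of_eq (Submodule.finrank_mono hle) p.2
        have hfr0 : finrank F (p.1 ⊓ p'.1 : Submodule F (Fin k → F)) ≠ 0 := by
          rw [Ne, Submodule.finrank_eq_zero]; exact hbot
        have heq : p.1 ⊓ p'.1 = p.1 :=
          Submodule.eq_of_le_of_finrank_le hle (by rw [p.2]; omega)
        have : p.1 ≤ p'.1 := by rw [← heq]; exact inf_le_right
        exact hne (Submodule.eq_of_le_of_finrank_eq this (by rw [p.2, p'.2]))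
      have hU : finrank F (p.1 ⊔ p'.1 : Submodule F (Fin k → F)) = 2 := by
        have := Submodule.finrank_sup_add_finrank_inf_eq p.1 p'.1
        rw [hinf, p.2, p'.2, finrank_bot] at this
        omega
      rw [hU, hV] at hc
      rw [if_neg hpp]
      exact Nat.eq_of_mul_eq_mul_right hq1 (by rw [hbq]; exact hc)
  -- entries of N * Nᵀ
  have hentry : ∀ p p' : Pt, (N * Nᵀ) p p' = if p = p' then (a:ℚ) else (b:ℚ) := by
    intro p p'
    rw [Matrix.mul_apply]
    have h1 : ∀ y : Pt, N p y * Nᵀ y p' =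
        if p.1 ⊔ p'.1 ≤ (e.symm y).1 then 1 else 0 := by
      intro y
      show (if p.1 ≤ (e.symm y).1 then (1:ℚ) else 0)
          * (if p'.1 ≤ (e.symm y).1 then (1:ℚ) else 0) = _
      by_cases h1 : p.1 ≤ (e.symm y).1 <;> by_cases h2 : p'.1 ≤ (e.symm y).1 <;>
        simp [h1, h2, sup_le_iff]
    rw [Finset.sum_congr rfl (fun y _ => h1 y), Finset.sum_boole, ← Fintype.card_subtype]
    have h2 : Fintype.card {y : Pt // p.1 ⊔ p'.1 ≤ (e.symm y).1}
        = Nat.card {W : Hy // p.1 ⊔ p'.1 ≤ W.1} := by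
      rw [Nat.card_eq_fintype_card]
      exact Fintype.card_congr (Equiv.subtypeEquiv e.symm (fun y => Iff.rfl))
    rw [h2, hcount p p']
    split_ifs <;> norm_cast
  -- N is invertible
  have hdet : N.det ≠ 0 := by
    intro h0
    have h0t : Nᵀ.det = 0 := by rwa [Matrix.det_transpose]
    obtain ⟨v, hv0, hv⟩ := Matrix.exists_mulVec_eq_zero_iff.mpr h0t
    have hzero : (N * Nᵀ).mulVec v = 0 := by
      rw [← Matrix.mulVec_mulVec, hv, Matrix.mulVec_zero]
    have hs0 : v ⬝ᵥ ((N * Nᵀ).mulVec v) = 0 := by rw [hzero, dotProduct_zero]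
    have hsplit : ∀ p p' : Pt, (N * Nᵀ) p p'
        = (b:ℚ) + if p = p' then (a:ℚ) - (b:ℚ) else 0 := by
      intro p p'; rw [hentry]; split_ifs <;> ring
    have hinner : ∀ p : Pt, ((N * Nᵀ).mulVec v) p
        = (b:ℚ) * (∑ p', v p') + ((a:ℚ) - b) * v p := by
      intro p
      rw [Matrix.mulVec, dotProduct]
      rw [Finset.sum_congr rfl (fun p' _ => by rw [hsplit p p'])]
      simp only [add_mul, ite_mul, zero_mul]
      rw [Finset.sum_add_distrib, ← Finset.mul_sum, Finset.sum_ite_eq]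
      simp
    have hs : v ⬝ᵥ ((N * Nᵀ).mulVec v)
        = (b:ℚ) * (∑ p, v p) * (∑ p, v p) + ((a:ℚ) - b) * ∑ p, v p * v p := by
      rw [dotProduct]
      rw [Finset.sum_congr rfl (fun p _ => by rw [hinner p])]
      simp only [mul_add]
      rw [Finset.sum_add_distrib, ← Finset.sum_mul]
      have : ∀ p : Pt, v p * (((a:ℚ) - b) * v p) = ((a:ℚ) - b) * (v p * v p) :=
        fun p => by ring
      rw [Finset.sum_congr rfl (fun p _ => this p), ← Finset.mul_sum]
      ring
    have hab' : 0 < (a:ℚ) - b := by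
      have : (b:ℚ) < a := by exact_mod_cast hab
      linarith
    have hv2 : 0 < ∑ p, v p * v p := by
      have hne : ∃ p, v p ≠ 0 := Function.ne_iff.mp hv0
      obtain ⟨p0, hp0⟩ := hne
      exact Finset.sum_pos' (fun i _ => mul_self_nonneg _)
        ⟨p0, Finset.mem_univ _, mul_self_pos.mpr hp0⟩
    have hb0 : (0:ℚ) ≤ (b:ℚ) := Nat.cast_nonneg b
    have hsq : (0:ℚ) ≤ (∑ p, v p) * (∑ p, v p) := mul_self_nonneg _
    have hpos : 0 < v ⬝ᵥ ((N * Nᵀ).mulVec v) := by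
      rw [hs]
      have h1 : 0 ≤ (b:ℚ) * (∑ p, v p) * (∑ p, v p) := by
        rw [mul_assoc]; exact mul_nonneg hb0 hsq
      have h2 : 0 < ((a:ℚ) - b) * ∑ p, v p * v p := mul_pos hab' hv2
      linarith
    rw [hs0] at hpos
    exact lt_irrefl _ hpos
  have hu : IsUnit N.det := isUnit_iff_ne_zero.mpr hdet
  have htr : Matrix.trace A = Matrix.trace B := by
    have hA' : A = N * B * N⁻¹ := by
      rw [← hAN, Matrix.mul_assoc, Matrix.mul_nonsing_inv _ hu, Matrix.mul_one]
    rw [hA', Matrix.trace_mul_comm, ← Matrix.mul_assoc,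
      Matrix.nonsing_inv_mul _ hu, Matrix.one_mul]
  rw [htrA, htrB] at htr
  exact_mod_cast htr
end


/-- **Block's theorem.** Let `G` be a group of collineations of `PG(k-1,q)`: `G` acts
on the points (1-dimensional subspaces of `F_q^k`) and on the hyperplanes
(`(k-1)`-dimensional subspaces), with every element acting as a semilinear bijection
of `F_q^k`. Then the number of `G`-orbits of points equals the number of `G`-orbits
of hyperplanes. -/


theorem block_point_hyperplane_orbit_count (F : Type) [Field F] [Fintype F]
    (k : ℕ) (hk : 2 ≤ k) (G : Type) [Group G]
    [MulAction G {W : Submodule F (Fin k → F) // Module.finrank F W = 1}]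
    [MulAction G {W : Submodule F (Fin k → F) // Module.finrank F W = k - 1}]
    (hG : ∀ g : G, ∃ (σ : F ≃+* F) (f : (Fin k → F) ≃+ (Fin k → F)),
      (∀ (c : F) (x : Fin k → F), f (c • x) = σ c • f x) ∧
      (∀ p : {W : Submodule F (Fin k → F) // Module.finrank F W = 1},
        ((g • p).1 : Set (Fin k → F)) = ⇑f '' (p.1 : Set (Fin k → F))) ∧
      (∀ W : {W : Submodule F (Fin k → F) // Module.finrank F W = k - 1},
        ((g • W).1 : Set (Fin k → F)) = ⇑f '' (W.1 : Set (Fin k → F)))) :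
    Nat.card (MulAction.orbitRel.Quotient G
        {W : Submodule F (Fin k → F) // Module.finrank F W = 1}) =
      Nat.card (MulAction.orbitRel.Quotient G
        {W : Submodule F (Fin k → F) // Module.finrank F W = k - 1}) := by
  classical
  have hfinsub : Finite (Submodule F (Fin k → F)) :=
    Finite.of_injective (fun W => (W : Set (Fin k → F))) SetLike.coe_injective
  have finPt : Finite {W : Submodule F (Fin k → F) // Module.finrank F W = 1} := Subtype.finite
  have finHy : Finite {W : Submodule F (Fin k → F) // Module.finrank F W = k - 1} := Subtype.finite
  -- incidence compatibility of the action
  have hcompat : ∀ (g : G) (p : {W : Submodule F (Fin k → F) // Module.finrank F W = 1}) (W : {W : Submodule F (Fin k → F) // Module.finrank F W = k - 1}),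
      p.1 ≤ W.1 ↔ (g • p).1 ≤ (g • W).1 := by
    intro g p W
    obtain ⟨σ, f, hsc, hp, hW⟩ := hG g
    have himg := Set.image_subset_image_iff (f := ⇑f) f.injective
      (s := (p.1 : Set (Fin k → F))) (t := (W.1 : Set (Fin k → F)))
    rw [← hp p, ← hW W] at himg
    constructor
    · intro h
      exact SetLike.coe_subset_coe.mp (himg.mpr (SetLike.coe_subset_coe.mpr h))
    · intro h
      exact SetLike.coe_subset_coe.mp (himg.mp (SetLike.coe_subset_coe.mpr h))
  -- pass to the image of G in the product of permutation groups
  set φ : G →* Equiv.Perm {W : Submodule F (Fin k → F) // Module.finrank F W = 1} × Equiv.Perm {W : Submodule F (Fin k → F) // Module.finrank F W = k - 1} :=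
    (MulAction.toPermHom G {W : Submodule F (Fin k → F) // Module.finrank F W = 1}).prod (MulAction.toPermHom G {W : Submodule F (Fin k → F) // Module.finrank F W = k - 1}) with hφ
  set K := φ.range with hK
  letI : MulAction K {W : Submodule F (Fin k → F) // Module.finrank F W = 1} :=
    { smul := fun x p => x.1.1 p
      one_smul := fun p => rfl
      mul_smul := fun x y p => rfl }
  letI : MulAction K {W : Submodule F (Fin k → F) // Module.finrank F W = k - 1} :=
    { smul := fun x W => x.1.2 W
      one_smul := fun W => rfl
      mul_smul := fun x y W => rfl }
  have hsmulPt : ∀ (g : G) (p : {W : Submodule F (Fin k → F) // Module.finrank F W = 1}), (⟨φ g, ⟨g, rfl⟩⟩ : K) • p = g • p := fun _ _ => rfl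
  have hsmulHy : ∀ (g : G) (W : {W : Submodule F (Fin k → F) // Module.finrank F W = k - 1}), (⟨φ g, ⟨g, rfl⟩⟩ : K) • W = g • W := fun _ _ => rfl
  -- orbit relations agree
  have horbPt : orbitRel G {W : Submodule F (Fin k → F) // Module.finrank F W = 1} = orbitRel K {W : Submodule F (Fin k → F) // Module.finrank F W = 1} := by
    apply Setoid.ext
    intro x y
    show x ∈ orbit G y ↔ x ∈ orbit K y
    constructor
    · rintro ⟨g, rfl⟩
      exact ⟨⟨φ g, ⟨g, rfl⟩⟩, rfl⟩
    · rintro ⟨x', rfl⟩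
      obtain ⟨g, hg⟩ := x'.2
      refine ⟨g, ?_⟩
      show g • y = x'.1.1 y
      rw [← hg]; rfl
  have horbHy : orbitRel G {W : Submodule F (Fin k → F) // Module.finrank F W = k - 1} = orbitRel K {W : Submodule F (Fin k → F) // Module.finrank F W = k - 1} := by
    apply Setoid.ext
    intro x y
    show x ∈ orbit G y ↔ x ∈ orbit K y
    constructor
    · rintro ⟨g, rfl⟩
      exact ⟨⟨φ g, ⟨g, rfl⟩⟩, rfl⟩
    · rintro ⟨x', rfl⟩
      obtain ⟨g, hg⟩ := x'.2
      refine ⟨g, ?_⟩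
      show g • y = x'.1.2 y
      rw [← hg]; rfl
  -- fixed point counts agree for each element of K
  have hfix : ∀ x : K, Nat.card (fixedBy {W : Submodule F (Fin k → F) // Module.finrank F W = 1} x) = Nat.card (fixedBy {W : Submodule F (Fin k → F) // Module.finrank F W = k - 1} x) := by
    intro x
    obtain ⟨g, hg⟩ := x.2
    have h1 : Nat.card (fixedBy {W : Submodule F (Fin k → F) // Module.finrank F W = 1} x) = Nat.card {p : {W : Submodule F (Fin k → F) // Module.finrank F W = 1} // g • p = p} := by
      apply Nat.card_congr
      apply Equiv.subtypeEquivRight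
      intro p
      have hx : x • p = g • p := by
        show x.1.1 p = g • p
        rw [← hg]; rfl
      rw [MulAction.mem_fixedBy, hx]
    have h2 : Nat.card (fixedBy {W : Submodule F (Fin k → F) // Module.finrank F W = k - 1} x) = Nat.card {W : {W : Submodule F (Fin k → F) // Module.finrank F W = k - 1} // g • W = W} := by
      apply Nat.card_congr
      apply Equiv.subtypeEquivRight
      intro W
      have hx : x • W = g • W := by
        show x.1.2 W = g • W
        rw [← hg]; rfl
      rw [MulAction.mem_fixedBy, hx]
    rw [h1, h2]
    have := BlockAux.fixed_card_eq F k hk (MulAction.toPerm g : Equiv.Perm {W : Submodule F (Fin k → F) // Module.finrank F W = 1})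
      (MulAction.toPerm g : Equiv.Perm {W : Submodule F (Fin k → F) // Module.finrank F W = k - 1}) (fun p W => hcompat g p W)
    exact this
  -- Burnside on both sides
  haveI : Fintype K := Fintype.ofFinite K
  haveI : Fintype {W : Submodule F (Fin k → F) // Module.finrank F W = 1} := Fintype.ofFinite {W : Submodule F (Fin k → F) // Module.finrank F W = 1}
  haveI : Fintype {W : Submodule F (Fin k → F) // Module.finrank F W = k - 1} := Fintype.ofFinite {W : Submodule F (Fin k → F) // Module.finrank F W = k - 1}
  haveI : ∀ x : K, Fintype (fixedBy {W : Submodule F (Fin k → F) // Module.finrank F W = 1} x) := fun x => Fintype.ofFinite _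
  haveI : ∀ x : K, Fintype (fixedBy {W : Submodule F (Fin k → F) // Module.finrank F W = k - 1} x) := fun x => Fintype.ofFinite _
  haveI : Fintype (orbitRel.Quotient K {W : Submodule F (Fin k → F) // Module.finrank F W = 1}) := Fintype.ofFinite _
  haveI : Fintype (orbitRel.Quotient K {W : Submodule F (Fin k → F) // Module.finrank F W = k - 1}) := Fintype.ofFinite _
  have hb1 := MulAction.sum_card_fixedBy_eq_card_orbits_mul_card_group K {W : Submodule F (Fin k → F) // Module.finrank F W = 1}
  have hb2 := MulAction.sum_card_fixedBy_eq_card_orbits_mul_card_group K {W : Submodule F (Fin k → F) // Module.finrank F W = k - 1}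
  have hsums : (∑ x : K, Fintype.card (fixedBy {W : Submodule F (Fin k → F) // Module.finrank F W = 1} x))
      = ∑ x : K, Fintype.card (fixedBy {W : Submodule F (Fin k → F) // Module.finrank F W = k - 1} x) := by
    apply Finset.sum_congr rfl
    intro x _
    have := hfix x
    rwa [Nat.card_eq_fintype_card, Nat.card_eq_fintype_card] at this
  rw [hb1, hb2] at hsums
  have hKpos : 0 < Fintype.card K := Fintype.card_pos
  have hcard : Fintype.card (orbitRel.Quotient K {W : Submodule F (Fin k → F) // Module.finrank F W = 1})
      = Fintype.card (orbitRel.Quotient K {W : Submodule F (Fin k → F) // Module.finrank F W = k - 1}) :=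
    Nat.eq_of_mul_eq_mul_right hKpos hsums
  have e1 : Nat.card (orbitRel.Quotient G {W : Submodule F (Fin k → F) // Module.finrank F W = 1}) = Nat.card (orbitRel.Quotient K {W : Submodule F (Fin k → F) // Module.finrank F W = 1}) := by
    unfold MulAction.orbitRel.Quotient
    rw [horbPt]
  have e2 : Nat.card (orbitRel.Quotient G {W : Submodule F (Fin k → F) // Module.finrank F W = k - 1}) = Nat.card (orbitRel.Quotient K {W : Submodule F (Fin k → F) // Module.finrank F W = k - 1}) := by
    unfold MulAction.orbitRel.Quotient
    rw [horbHy]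
  rw [e1, e2, Nat.card_eq_fintype_card, Nat.card_eq_fintype_card, hcard]
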